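/- For all γ₁, γ₂ ∈ ℂ, the operators K₁ := Ĉ, K₂ := (1/2)(Î₂′ − Î₂), K₃ := ⁅K₁, K₂⁆ close the polynomial commutation relations ⁅K₁, K₃⁆ = 4K₂ − 2γ₂K₁² and ⁅K₂, K₃⁆ = (γ₁² + 2iγ₁γ₂ + 2γ₂Ĥ₂)K₁ + 4γ₂K₁K₂ − 2γ₂K₃ in End(V). -/

import Mathlib

noncomputable section

/-- `V = ℂ[q₁,q₂]`, the polynomial ring in two variables over `ℂ`. -/
abbrev V : Type := MvPolynomial (Fin 2) ℂ

/-- `q̂₁`: multiplication by `q₁`. -/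
noncomputable def q1 : Module.End ℂ V := LinearMap.mulLeft ℂ (MvPolynomial.X 0)

/-- `q̂₂`: multiplication by `q₂`. -/
noncomputable def q2 : Module.End ℂ V := LinearMap.mulLeft ℂ (MvPolynomial.X 1)

/-- `p̂₁ = −i ∂/∂q₁`. -/
noncomputable def p1 : Module.End ℂ V :=
  (-Complex.I) • (MvPolynomial.pderiv (0 : Fin 2)).toLinearMap

/-- `p̂₂ = −i ∂/∂q₂`. -/
noncomputable def p2 : Module.End ℂ V :=
  (-Complex.I) • (MvPolynomial.pderiv (1 : Fin 2)).toLinearMap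

lemma pderiv_pderiv (i j : Fin 2) (f : V) :
    MvPolynomial.pderiv i (MvPolynomial.pderiv j f)
      = MvPolynomial.pderiv j (MvPolynomial.pderiv i f) := by
  induction f using MvPolynomial.induction_on with
  | C a => simp
  | add f g hf hg => simp [hf, hg]
  | mul_X f k hf =>
      simp only [MvPolynomial.pderiv_mul, MvPolynomial.pderiv_X, map_add,
        MvPolynomial.pderiv_mul, hf, Pi.single_apply]
      split_ifs <;> simp <;> ring

lemma pq1 : p1 * q1 = q1 * p1 - Complex.I • 1 := by
  apply LinearMap.ext; intro f
  simp [p1, q1, Module.End.mul_apply, MvPolynomial.pderiv_X]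
  ring

lemma pq2 : p2 * q2 = q2 * p2 - Complex.I • 1 := by
  apply LinearMap.ext; intro f
  simp [p2, q2, Module.End.mul_apply, MvPolynomial.pderiv_X]
  ring

lemma pq12 : p1 * q2 = q2 * p1 := by
  apply LinearMap.ext; intro f
  simp [p1, q2, Module.End.mul_apply, MvPolynomial.pderiv_X]

lemma pq21 : p2 * q1 = q1 * p2 := by
  apply LinearMap.ext; intro f
  simp [p2, q1, Module.End.mul_apply, MvPolynomial.pderiv_X]

lemma qq : q2 * q1 = q1 * q2 := by
  apply LinearMap.ext; intro f
  simp [q1, q2, Module.End.mul_apply]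
  ring

lemma pp : p2 * p1 = p1 * p2 := by
  apply LinearMap.ext; intro f
  simp [p1, p2, Module.End.mul_apply, pderiv_pderiv 1 0]

lemma I2c : Complex.I ^ 2 = -1 := Complex.I_sq
lemma I3c : Complex.I ^ 3 = -Complex.I := by rw [pow_succ, I2c, neg_one_mul]
lemma I4c : Complex.I ^ 4 = 1 := by rw [pow_succ, I3c, neg_mul, Complex.I_mul_I, neg_neg]
lemma I5c : Complex.I ^ 5 = Complex.I := by rw [pow_succ, I4c, one_mul]
lemma I6c : Complex.I ^ 6 = -1 := by rw [pow_succ, I5c, Complex.I_mul_I]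
lemma I7c : Complex.I ^ 7 = -Complex.I := by rw [pow_succ, I6c, neg_one_mul]
lemma I8c : Complex.I ^ 8 = 1 := by rw [pow_succ, I7c, neg_mul, Complex.I_mul_I, neg_neg]

lemma pq1' (x : Module.End ℂ V) : p1 * (q1 * x) = q1 * (p1 * x) - Complex.I • x := by
  rw [← mul_assoc, pq1, sub_mul, mul_assoc, smul_mul_assoc, one_mul]
lemma pq2' (x : Module.End ℂ V) : p2 * (q2 * x) = q2 * (p2 * x) - Complex.I • x := by
  rw [← mul_assoc, pq2, sub_mul, mul_assoc, smul_mul_assoc, one_mul]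
lemma pq12' (x : Module.End ℂ V) : p1 * (q2 * x) = q2 * (p1 * x) := by
  rw [← mul_assoc, pq12, mul_assoc]
lemma pq21' (x : Module.End ℂ V) : p2 * (q1 * x) = q1 * (p2 * x) := by
  rw [← mul_assoc, pq21, mul_assoc]
lemma qq' (x : Module.End ℂ V) : q2 * (q1 * x) = q1 * (q2 * x) := by
  rw [← mul_assoc, qq, mul_assoc]
lemma pp' (x : Module.End ℂ V) : p2 * (p1 * x) = p1 * (p2 * x) := by
  rw [← mul_assoc, pp, mul_assoc]


/-- `D = q̂₁p̂₁ + q̂₂p̂₂`. -/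
noncomputable def Dop : Module.End ℂ V := q1 * p1 + q2 * p2

/-- `Ĉ = q̂₁p̂₂ − q̂₂p̂₁`, the quantum angular momentum. -/
noncomputable def Cop : Module.End ℂ V := q1 * p2 - q2 * p1

/-- `Ĥ₂ = p̂₁² + p̂₂² + γ₁D + γ₂D²`. -/
noncomputable def H2 (γ₁ γ₂ : ℂ) : Module.End ℂ V :=
  p1 ^ 2 + p2 ^ 2 + γ₁ • Dop + γ₂ • Dop ^ 2

/-- `Î₂ = p̂₂² + γ₁ q̂₂p̂₂ + γ₂((q̂₁² + q̂₂²)p̂₂² − Ĉ²)`. -/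
noncomputable def I2 (γ₁ γ₂ : ℂ) : Module.End ℂ V :=
  p2 ^ 2 + γ₁ • (q2 * p2) + γ₂ • ((q1 ^ 2 + q2 ^ 2) * p2 ^ 2 - Cop ^ 2)

/-- `Î₂′ = p̂₁² + γ₁ q̂₁p̂₁ + γ₂(q̂₁² + q̂₂²)p̂₁²`. -/
noncomputable def I2' (γ₁ γ₂ : ℂ) : Module.End ℂ V :=
  p1 ^ 2 + γ₁ • (q1 * p1) + γ₂ • ((q1 ^ 2 + q2 ^ 2) * p1 ^ 2)

/-- `K₁ = Ĉ`. -/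
noncomputable def K1 : Module.End ℂ V := Cop

/-- `K₂ = (1/2)(Î₂′ − Î₂)`. -/
noncomputable def K2 (γ₁ γ₂ : ℂ) : Module.End ℂ V :=
  ((1 : ℂ)/2) • (I2' γ₁ γ₂ - I2 γ₁ γ₂)

/-- `K₃ = ⁅K₁, K₂⁆`. -/
noncomputable def K3 (γ₁ γ₂ : ℂ) : Module.End ℂ V :=
  K1 * K2 γ₁ γ₂ - K2 γ₁ γ₂ * K1

set_option maxHeartbeats 1000000 in
lemma K2_eq (γ₁ γ₂ : ℂ) : K2 γ₁ γ₂ = ((-1/2) : ℂ) • (p2 * (p2)) + ((1/2) : ℂ) • (p1 * (p1)) + ((1/2) * γ₂ * Complex.I + (-1/2) * γ₁ : ℂ) • (q2 * (p2)) + ((-1/2) * γ₂ : ℂ) • (q2 * (q2 * (p2 * (p2)))) + ((1) * γ₂ : ℂ) • (q2 * (q2 * (p1 * (p1)))) + ((1/2) * γ₂ * Complex.I + (1/2) * γ₁ : ℂ) • (q1 * (p1)) + ((-1) * γ₂ : ℂ) • (q1 * (q2 * (p1 * (p2)))) + ((1/2) * γ₂ : ℂ) • (q1 * (q1 * (p1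 * (p1)))) := by
  simp only [K2, I2, I2', Cop]
  simp only [pow_two, mul_add, add_mul, mul_sub, sub_mul, smul_mul_assoc, mul_smul_comm,
      smul_smul, smul_add, smul_sub, mul_assoc, mul_one, one_mul,
      pq1', pq2', pq12', pq21', qq', pp', pq1, pq2, pq12, pq21, qq, pp]
  match_scalars <;> (ring_nf; (try simp only [I2c, I3c, I4c, I5c, I6c, I7c, I8c, one_mul, neg_mul, mul_neg, neg_neg]); try ring_nf)

set_option maxHeartbeats 1000000 in
lemma K3_eq (γ₁ γ₂ : ℂ) : K3 γ₁ γ₂ = ((2) * Complex.I : ℂ) • (p1 * (p2)) + ((1) * γ₁ * Complex.I : ℂ) • (q2 * (p1)) + ((2) * γ₂ * Complex.I : ℂ) • (q2 * (q2 * (p1 * (p2)))) + ((1) * γ₁ * Complex.I : ℂ) • (q1 * (p2)) + ((2) * γ₂ * Complex.I : ℂ) • (q1 * (q1 * (p1 * (p2)))) := by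
  rw [K3, K2_eq]
  simp only [K1, Cop]
  simp only [pow_two, mul_add, add_mul, mul_sub, sub_mul, smul_mul_assoc, mul_smul_comm,
      smul_smul, smul_add, smul_sub, mul_assoc, mul_one, one_mul,
      pq1', pq2', pq12', pq21', qq', pp', pq1, pq2, pq12, pq21, qq, pp]
  match_scalars <;> (ring_nf; (try simp only [I2c, I3c, I4c, I5c, I6c, I7c, I8c, one_mul, neg_mul, mul_neg, neg_neg]); try ring_nf)

set_option maxHeartbeats 1000000 in
lemma K1K2_eq (γ₁ γ₂ : ℂ) : K1 * K2 γ₁ γ₂ = ((-1/2) * γ₂ + (1/2) * γ₁ * Complex.I : ℂ) • (q2 * (p1)) + ((1/2) : ℂ) • (q2 * (p1 * (p2 * (p2)))) + ((-1/2) : ℂ) • (q2 * (p1 * (p1 * (p1)))) + ((-3/2) * γ₂ * Complex.I + (1/2) * γ₁ : ℂ) • (q2 * (q2 * (p1 * (p2)))) + ((1/2) * γ₂ : ℂ) • (q2 * (q2 * (q2 * (p1 * (p2 * (p2)))))) + ((-1) * γ₂ : ℂ) • (q2 * (q2 * (q2 * (p1 * (p1 * (p1)))))) + ((1/2) * γ₂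 + (1/2) * γ₁ * Complex.I : ℂ) • (q1 * (p2)) + ((-1/2) : ℂ) • (q1 * (p2 * (p2 * (p2)))) + ((1/2) : ℂ) • (q1 * (p1 * (p1 * (p2)))) + ((3/2) * γ₂ * Complex.I + (-1/2) * γ₁ : ℂ) • (q1 * (q2 * (p2 * (p2)))) + ((-3/2) * γ₂ * Complex.I + (-1/2) * γ₁ : ℂ) • (q1 * (q2 * (p1 * (p1)))) + ((-1/2) * γ₂ : ℂ) • (q1 * (q2 * (q2 * (p2 * (p2 * (p2)))))) + ((2) * γ₂ : ℂ) • (q1 * (q2 * (q2 * (p1 * (p1 * (p2)))))) + ((3/2) * γ₂ * Complex.I + (1/2) * γ₁ : ℂ) • (q1 * (q1 * (p1 * (p2)))) + ((-1) * γ₂ : ℂ) • (q1 * (q1 * (q2 * (p1 * (p2 * (p2)))))) + ((-1/2) * γ₂ : ℂ) • (q1 * (q1 * (q2 * (p1 * (p1 * (p1)))))) + ((1/2) * γ₂ : ℂ) • (q1 * (q1 * (q1 * (p1 * (p1 * (p2)))))) := by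
  rw [K2_eq]
  simp only [K1, Cop]
  simp only [pow_two, mul_add, add_mul, mul_sub, sub_mul, smul_mul_assoc, mul_smul_comm,
      smul_smul, smul_add, smul_sub, mul_assoc, mul_one, one_mul,
      pq1', pq2', pq12', pq21', qq', pp', pq1, pq2, pq12, pq21, qq, pp]
  match_scalars <;> (ring_nf; (try simp only [I2c, I3c, I4c, I5c, I6c, I7c, I8c, one_mul, neg_mul, mul_neg, neg_neg]); try ring_nf)

set_option maxHeartbeats 1000000 in
lemma K1K1_eq : K1 * K1 = ((1) * Complex.I : ℂ) • (q2 * (p2)) + ((1) : ℂ) • (q2 * (q2 * (p1 * (p1)))) + ((1) * Complex.I : ℂ) • (q1 * (p1)) + ((-2) : ℂ) • (q1 * (q2 * (p1 * (p2)))) + ((1) : ℂ) • (q1 * (q1 * (p2 * (p2)))) := by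
  simp only [K1, Cop]
  simp only [pow_two, mul_add, add_mul, mul_sub, sub_mul, smul_mul_assoc, mul_smul_comm,
      smul_smul, smul_add, smul_sub, mul_assoc, mul_one, one_mul,
      pq1', pq2', pq12', pq21', qq', pp', pq1, pq2, pq12, pq21, qq, pp]
  match_scalars <;> (ring_nf; (try simp only [I2c, I3c, I4c, I5c, I6c, I7c, I8c, one_mul, neg_mul, mul_neg, neg_neg]); try ring_nf)

set_option maxHeartbeats 1000000 in
lemma K1K3_eq (γ₁ γ₂ : ℂ) : K1 * K3 γ₁ γ₂ = ((-1) * γ₁ : ℂ) • (q2 * (p2)) + ((-2) * Complex.I : ℂ) • (q2 * (p1 * (p1 * (p2)))) + ((-1) * γ₁ * Complex.I : ℂ) • (q2 * (q2 * (p1 * (p1)))) + ((-2) * γ₂ * Complex.I : ℂ) • (q2 * (q2 * (q2 * (p1 * (p1 * (p2)))))) + ((1) * γ₁ : ℂ) • (q1 * (p1)) + ((2) * Complex.I : ℂ) • (q1 * (p1 * (p2 * (p2)))) + ((2) * γ₂ * Complex.I : ℂ) • (q1 * (q2 * (q2 * (p1 * (p2 * (p2)))))) + ((1) * γ₁ *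 Complex.I : ℂ) • (q1 * (q1 * (p2 * (p2)))) + ((-2) * γ₂ * Complex.I : ℂ) • (q1 * (q1 * (q2 * (p1 * (p1 * (p2)))))) + ((2) * γ₂ * Complex.I : ℂ) • (q1 * (q1 * (q1 * (p1 * (p2 * (p2)))))) := by
  rw [K3_eq]
  simp only [K1, Cop]
  simp only [pow_two, mul_add, add_mul, mul_sub, sub_mul, smul_mul_assoc, mul_smul_comm,
      smul_smul, smul_add, smul_sub, mul_assoc, mul_one, one_mul,
      pq1', pq2', pq12', pq21', qq', pp', pq1, pq2, pq12, pq21, qq, pp]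
  match_scalars <;> (ring_nf; (try simp only [I2c, I3c, I4c, I5c, I6c, I7c, I8c, one_mul, neg_mul, mul_neg, neg_neg]); try ring_nf)

set_option maxHeartbeats 1000000 in
lemma K3K1_eq (γ₁ γ₂ : ℂ) : K3 γ₁ γ₂ * K1 = ((2) : ℂ) • (p2 * (p2)) + ((-2) : ℂ) • (p1 * (p1)) + ((1) * γ₁ : ℂ) • (q2 * (p2)) + ((-2) * Complex.I : ℂ) • (q2 * (p1 * (p1 * (p2)))) + ((2) * γ₂ : ℂ) • (q2 * (q2 * (p2 * (p2)))) + ((-2) * γ₂ + (-1) * γ₁ * Complex.I : ℂ) • (q2 * (q2 * (p1 * (p1)))) + ((-2) * γ₂ * Complex.I : ℂ) • (q2 * (q2 * (q2 * (p1 * (p1 * (p2)))))) + ((-1) * γ₁ : ℂ) • (q1 * (p1)) + ((2) * Complex.I : ℂ) • (q1 * (p1 * (p2 * (p2)))) + ((2) * γ₂ * Complex.I : ℂ) • (q1 * (q2 * (q2 * (p1 * (p2 * (p2)))))) + ((2) * γ₂ + (1) * γ₁ * Complex.I : ℂ) • (q1 * (q1 * (p2 * (p2)))) + ((-2) * γ₂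 : ℂ) • (q1 * (q1 * (p1 * (p1)))) + ((-2) * γ₂ * Complex.I : ℂ) • (q1 * (q1 * (q2 * (p1 * (p1 * (p2)))))) + ((2) * γ₂ * Complex.I : ℂ) • (q1 * (q1 * (q1 * (p1 * (p2 * (p2)))))) := by
  rw [K3_eq]
  simp only [K1, Cop]
  simp only [pow_two, mul_add, add_mul, mul_sub, sub_mul, smul_mul_assoc, mul_smul_comm,
      smul_smul, smul_add, smul_sub, mul_assoc, mul_one, one_mul,
      pq1', pq2', pq12', pq21', qq', pp', pq1, pq2, pq12, pq21, qq, pp]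
  match_scalars <;> (ring_nf; (try simp only [I2c, I3c, I4c, I5c, I6c, I7c, I8c, one_mul, neg_mul, mul_neg, neg_neg]); try ring_nf)

set_option maxHeartbeats 4000000 in
lemma K2K3_eq (γ₁ γ₂ : ℂ) : K2 γ₁ γ₂ * K3 γ₁ γ₂ = ((-1) * Complex.I : ℂ) • (p1 * (p2 * (p2 * (p2)))) + ((1) * Complex.I : ℂ) • (p1 * (p1 * (p1 * (p2)))) + ((1/2) * γ₁ * γ₂ * Complex.I + (-1/2) * γ₁^2 : ℂ) • (q2 * (p1)) + ((-5) * γ₂ + (-3/2) * γ₁ * Complex.I : ℂ) • (q2 * (p1 * (p2 * (p2)))) + ((1/2) * γ₁ * Complex.I : ℂ) • (q2 * (p1 * (p1 * (p1)))) + ((-3/2) * γ₁ * γ₂ + (-1/2) * γ₁^2 * Complex.I : ℂ) • (q2 * (q2 * (p1 * (p2)))) + ((-2) * γ₂ * Complex.I : ℂ) • (q2 * (q2 * (p1 * (p2 * (p2 * (p2)))))) + ((3) * γ₂ * Complex.I : ℂ) • (q2 * (q2 * (p1 * (p1 * (p1 * (p2)))))) + ((-5) * γ₂^2 + (-3/2)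 * γ₁ * γ₂ * Complex.I : ℂ) • (q2 * (q2 * (q2 * (p1 * (p2 * (p2)))))) + ((1) * γ₁ * γ₂ * Complex.I : ℂ) • (q2 * (q2 * (q2 * (p1 * (p1 * (p1)))))) + ((-1) * γ₂^2 * Complex.I : ℂ) • (q2 * (q2 * (q2 * (q2 * (p1 * (p2 * (p2 * (p2)))))))) + ((2) * γ₂^2 * Complex.I : ℂ) • (q2 * (q2 * (q2 * (q2 * (p1 * (p1 * (p1 * (p2)))))))) + ((1/2) * γ₁ * γ₂ * Complex.I + (1/2) * γ₁^2 : ℂ) • (q1 * (p2)) + ((-1/2) * γ₁ * Complex.I : ℂ) • (q1 * (p2 * (p2 * (p2)))) + ((3) * γ₂ + (3/2) * γ₁ * Complex.I : ℂ) • (q1 * (p1 * (p1 * (p2)))) + ((-3/2) * γ₁ * γ₂ + (-1/2) * γ₁^2 * Complex.I : ℂ) • (q1 * (q2 * (p2 * (p2)))) + ((-3/2) * γ₁ * γ₂ + (1/2) * γ₁^2 * Complex.I : ℂ) • (q1 * (q2 * (p1 * (p1)))) + ((-2) * γ₂ * Complex.I : ℂ) • (q1 * (q2 * (p1 * (p1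 * (p2 * (p2)))))) + ((-1/2) * γ₁ * γ₂ * Complex.I : ℂ) • (q1 * (q2 * (q2 * (p2 * (p2 * (p2)))))) + ((3) * γ₂^2 + (1) * γ₁ * γ₂ * Complex.I : ℂ) • (q1 * (q2 * (q2 * (p1 * (p1 * (p2)))))) + ((-2) * γ₂^2 * Complex.I : ℂ) • (q1 * (q2 * (q2 * (q2 * (p1 * (p1 * (p2 * (p2)))))))) + ((5/2) * γ₁ * γ₂ + (1/2) * γ₁^2 * Complex.I : ℂ) • (q1 * (q1 * (p1 * (p2)))) + ((-1) * γ₂ * Complex.I : ℂ) • (q1 * (q1 * (p1 * (p2 * (p2 * (p2)))))) + ((2) * γ₂ * Complex.I : ℂ) • (q1 * (q1 * (p1 * (p1 * (p1 * (p2)))))) + ((-5) * γ₂^2 + (-2) * γ₁ * γ₂ * Complex.I : ℂ) • (q1 * (q1 * (q2 * (p1 * (p2 * (p2)))))) + ((1/2) * γ₁ * γ₂ * Complex.I : ℂ) • (q1 * (q1 * (q2 * (p1 * (p1 * (p1)))))) + ((-1) * γ₂^2 * Complex.I : ℂ) • (q1 * (q1 * (q2 * (q2 * (p1 * (p2 *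 (p2 * (p2)))))))) + ((3) * γ₂^2 * Complex.I : ℂ) • (q1 * (q1 * (q2 * (q2 * (p1 * (p1 * (p1 * (p2)))))))) + ((3) * γ₂^2 + (3/2) * γ₁ * γ₂ * Complex.I : ℂ) • (q1 * (q1 * (q1 * (p1 * (p1 * (p2)))))) + ((-2) * γ₂^2 * Complex.I : ℂ) • (q1 * (q1 * (q1 * (q2 * (p1 * (p1 * (p2 * (p2)))))))) + ((1) * γ₂^2 * Complex.I : ℂ) • (q1 * (q1 * (q1 * (q1 * (p1 * (p1 * (p1 * (p2)))))))) := by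
  rw [K2_eq, K3_eq]
  simp only [pow_two, mul_add, add_mul, mul_sub, sub_mul, smul_mul_assoc, mul_smul_comm,
      smul_smul, smul_add, smul_sub, mul_assoc, mul_one, one_mul,
      pq1', pq2', pq12', pq21', qq', pp', pq1, pq2, pq12, pq21, qq, pp]
  match_scalars <;> (ring_nf; (try simp only [I2c, I3c, I4c, I5c, I6c, I7c, I8c, one_mul, neg_mul, mul_neg, neg_neg]); try ring_nf)

set_option maxHeartbeats 4000000 in
lemma K3K2_eq (γ₁ γ₂ : ℂ) : K3 γ₁ γ₂ * K2 γ₁ γ₂ = ((4) * γ₂ * Complex.I : ℂ) • (p1 * (p2)) + ((-1) * Complex.I : ℂ) • (p1 * (p2 * (p2 * (p2)))) + ((1) * Complex.I : ℂ) • (p1 * (p1 * (p1 * (p2)))) + ((1/2) * γ₁ * γ₂ * Complex.I + (1/2) * γ₁^2 : ℂ) • (q2 * (p1)) + ((-5) * γ₂ + (-3/2) * γ₁ * Complex.I : ℂ) • (q2 * (p1 * (p2 * (p2)))) + ((4) * γ₂ + (1/2) * γ₁ * Complex.I : ℂ) • (q2 * (p1 * (p1 * (p1)))) + ((4) * γ₂^2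 * Complex.I + (-3/2) * γ₁ * γ₂ + (-1/2) * γ₁^2 * Complex.I : ℂ) • (q2 * (q2 * (p1 * (p2)))) + ((-2) * γ₂ * Complex.I : ℂ) • (q2 * (q2 * (p1 * (p2 * (p2 * (p2)))))) + ((3) * γ₂ * Complex.I : ℂ) • (q2 * (q2 * (p1 * (p1 * (p1 * (p2)))))) + ((-5) * γ₂^2 + (-3/2) * γ₁ * γ₂ * Complex.I : ℂ) • (q2 * (q2 * (q2 * (p1 * (p2 * (p2)))))) + ((4) * γ₂^2 + (1) * γ₁ * γ₂ * Complex.I : ℂ) • (q2 * (q2 * (q2 * (p1 * (p1 * (p1)))))) + ((-1) * γ₂^2 * Complex.I : ℂ) • (q2 * (q2 * (q2 * (q2 * (p1 * (p2 * (p2 * (p2)))))))) + ((2) * γ₂^2 * Complex.I : ℂ) • (q2 * (q2 * (q2 * (q2 * (p1 * (p1 * (p1 * (p2)))))))) + ((1/2) * γ₁ * γ₂ * Complex.I + (-1/2) * γ₁^2 : ℂ) • (q1 * (p2)) + ((-1/2) * γ₁ * Complex.I : ℂ) • (q1 * (p2 * (p2 * (p2)))) + ((-1) * γ₂ + (3/2)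 * γ₁ * Complex.I : ℂ) • (q1 * (p1 * (p1 * (p2)))) + ((-3/2) * γ₁ * γ₂ + (-1/2) * γ₁^2 * Complex.I : ℂ) • (q1 * (q2 * (p2 * (p2)))) + ((5/2) * γ₁ * γ₂ + (1/2) * γ₁^2 * Complex.I : ℂ) • (q1 * (q2 * (p1 * (p1)))) + ((-2) * γ₂ * Complex.I : ℂ) • (q1 * (q2 * (p1 * (p1 * (p2 * (p2)))))) + ((-1/2) * γ₁ * γ₂ * Complex.I : ℂ) • (q1 * (q2 * (q2 * (p2 * (p2 * (p2)))))) + ((-1) * γ₂^2 + (1) * γ₁ * γ₂ * Complex.I : ℂ) • (q1 * (q2 * (q2 * (p1 * (p1 * (p2)))))) + ((-2) * γ₂^2 * Complex.I : ℂ) • (q1 * (q2 * (q2 * (q2 * (p1 * (p1 * (p2 * (p2)))))))) + ((4) * γ₂^2 * Complex.I + (-3/2) * γ₁ * γ₂ + (1/2) * γ₁^2 * Complex.I : ℂ) • (q1 * (q1 * (p1 * (p2)))) + ((-1) * γ₂ * Complex.I : ℂ) • (q1 * (q1 * (p1 * (p2 * (p2 * (p2)))))) + ((2) * γ₂ * Complex.I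 : ℂ) • (q1 * (q1 * (p1 * (p1 * (p1 * (p2)))))) + ((-5) * γ₂^2 + (-2) * γ₁ * γ₂ * Complex.I : ℂ) • (q1 * (q1 * (q2 * (p1 * (p2 * (p2)))))) + ((4) * γ₂^2 + (1/2) * γ₁ * γ₂ * Complex.I : ℂ) • (q1 * (q1 * (q2 * (p1 * (p1 * (p1)))))) + ((-1) * γ₂^2 * Complex.I : ℂ) • (q1 * (q1 * (q2 * (q2 * (p1 * (p2 * (p2 * (p2)))))))) + ((3) * γ₂^2 * Complex.I : ℂ) • (q1 * (q1 * (q2 * (q2 * (p1 * (p1 * (p1 * (p2)))))))) + ((-1) * γ₂^2 + (3/2) * γ₁ * γ₂ * Complex.I : ℂ) • (q1 * (q1 * (q1 * (p1 * (p1 * (p2)))))) + ((-2) * γ₂^2 * Complex.I : ℂ) • (q1 * (q1 * (q1 * (q2 * (p1 * (p1 * (p2 * (p2)))))))) + ((1) * γ₂^2 * Complex.I : ℂ) • (q1 * (q1 * (q1 * (q1 * (p1 * (p1 * (p1 * (p2)))))))) := by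
  rw [K2_eq, K3_eq]
  simp only [pow_two, mul_add, add_mul, mul_sub, sub_mul, smul_mul_assoc, mul_smul_comm,
      smul_smul, smul_add, smul_sub, mul_assoc, mul_one, one_mul,
      pq1', pq2', pq12', pq21', qq', pp', pq1, pq2, pq12, pq21, qq, pp]
  match_scalars <;> (ring_nf; (try simp only [I2c, I3c, I4c, I5c, I6c, I7c, I8c, one_mul, neg_mul, mul_neg, neg_neg]); try ring_nf)

set_option maxHeartbeats 2000000 in
lemma H2K1_eq (γ₁ γ₂ : ℂ) : H2 γ₁ γ₂ * K1 = ((1) * γ₂ + (1) * γ₁ * Complex.I : ℂ) • (q2 * (p1)) + ((-1) : ℂ) • (q2 * (p1 * (p2 * (p2)))) + ((-1) : ℂ) • (q2 * (p1 * (p1 * (p1)))) + ((3) * γ₂ * Complex.I + (-1) * γ₁ : ℂ) • (q2 * (q2 * (p1 * (p2)))) + ((-1) * γ₂ : ℂ) • (q2 * (q2 * (q2 * (p1 * (p2 * (p2)))))) + ((-1) * γ₂ + (-1) * γ₁ * Complex.I : ℂ) • (q1 * (p2)) + ((1) : ℂ) • (q1 * (p2 * (p2 * (p2)))) + ((1)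 : ℂ) • (q1 * (p1 * (p1 * (p2)))) + ((-3) * γ₂ * Complex.I + (1) * γ₁ : ℂ) • (q1 * (q2 * (p2 * (p2)))) + ((3) * γ₂ * Complex.I + (-1) * γ₁ : ℂ) • (q1 * (q2 * (p1 * (p1)))) + ((1) * γ₂ : ℂ) • (q1 * (q2 * (q2 * (p2 * (p2 * (p2)))))) + ((-2) * γ₂ : ℂ) • (q1 * (q2 * (q2 * (p1 * (p1 * (p2)))))) + ((-3) * γ₂ * Complex.I + (1) * γ₁ : ℂ) • (q1 * (q1 * (p1 * (p2)))) + ((2) * γ₂ : ℂ) • (q1 * (q1 * (q2 * (p1 * (p2 * (p2)))))) + ((-1) * γ₂ : ℂ) • (q1 * (q1 * (q2 * (p1 * (p1 * (p1)))))) + ((1) * γ₂ : ℂ) • (q1 * (q1 * (q1 * (p1 * (p1 * (p2)))))) := by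
  simp only [H2, Dop, K1, Cop]
  simp only [pow_two, mul_add, add_mul, mul_sub, sub_mul, smul_mul_assoc, mul_smul_comm,
      smul_smul, smul_add, smul_sub, mul_assoc, mul_one, one_mul,
      pq1', pq2', pq12', pq21', qq', pp', pq1, pq2, pq12, pq21, qq, pp]
  match_scalars <;> (ring_nf; (try simp only [I2c, I3c, I4c, I5c, I6c, I7c, I8c, one_mul, neg_mul, mul_neg, neg_neg]); try ring_nf)


set_option maxHeartbeats 2000000 in
/-- the polynomial (Higgs-type) commutation relations
`⁅K₁, K₃⁆ = 4K₂ − 2γ₂K₁²` and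
`⁅K₂, K₃⁆ = (γ₁² + 2iγ₁γ₂ + 2γ₂Ĥ₂)K₁ + 4γ₂K₁K₂ − 2γ₂K₃`. -/
theorem quadratic_zernike_polynomial_algebra (γ₁ γ₂ : ℂ) :
    K1 * K3 γ₁ γ₂ - K3 γ₁ γ₂ * K1 = (4 : ℂ) • K2 γ₁ γ₂ - (2 * γ₂) • K1 ^ 2 ∧
    K2 γ₁ γ₂ * K3 γ₁ γ₂ - K3 γ₁ γ₂ * K2 γ₁ γ₂
      = ((γ₁ ^ 2 + 2 * Complex.I * γ₁ * γ₂) • (1 : Module.End ℂ V)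
            + (2 * γ₂) • H2 γ₁ γ₂) * K1
        + (4 * γ₂) • (K1 * K2 γ₁ γ₂) - (2 * γ₂) • K3 γ₁ γ₂ := by
  constructor
  · rw [K1K3_eq, K3K1_eq, K2_eq, pow_two, K1K1_eq]
    simp only [pow_two, mul_add, add_mul, mul_sub, sub_mul, smul_mul_assoc, mul_smul_comm,
      smul_smul, smul_add, smul_sub, mul_assoc, mul_one, one_mul,
      pq1', pq2', pq12', pq21', qq', pp', pq1, pq2, pq12, pq21, qq, pp]
    match_scalars <;> (ring_nf; (try simp only [I2c, I3c, I4c, I5c, I6c, I7c, I8c, one_mul, neg_mul, mul_neg, neg_neg]); try ring_nf)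
  · rw [K2K3_eq, K3K2_eq]
    simp only [add_mul, smul_mul_assoc, one_mul]
    rw [H2K1_eq, K1K2_eq, K3_eq]
    simp only [K1, Cop]
    simp only [pow_two, mul_add, add_mul, mul_sub, sub_mul, smul_mul_assoc, mul_smul_comm,
      smul_smul, smul_add, smul_sub, mul_assoc, mul_one, one_mul,
      pq1', pq2', pq12', pq21', qq', pp', pq1, pq2, pq12, pq21, qq, pp]
    match_scalars <;> (ring_nf; (try simp only [I2c, I3c, I4c, I5c, I6c, I7c, I8c, one_mul, neg_mul, mul_neg, neg_neg]); try ring_nf)
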